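/- Weighted potential bound for the Moser sequence: if V(r) ≤ M₁ r^{a₀} for r ∈ (0,1] with a₀ > −2 and M₁ > 0, then ∫_{ℝ²} V(|x|) w̄_n² dx ≤ δ_n where δ_n = M₁ r₀^{a₀+2} (log n)/((a₀+2) n^{a₀+2}) + (M₁/log n) ∫_{r₀/n}^{r₀} log²(r₀/r) r^{a₀+1} dr, and δ_n log n → 2 M₁ r₀^{a₀+2}/(a₀+2)³ as n → ∞. -/

import Mathlib

open MeasureTheory Real Filter

/-- The truncated-logarithm Moser function on the plane. -/
noncomputable def moserFn (r₀ : ℝ) (n : ℕ) (x : EuclideanSpace ℝ (Fin 2)) : ℝ :=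
  if ‖x‖ ≤ r₀ / n then Real.sqrt (Real.log n) / Real.sqrt (2 * π)
  else if ‖x‖ ≤ r₀ then Real.log (r₀ / ‖x‖) / (Real.sqrt (2 * π) * Real.sqrt (Real.log n))
  else 0

/-- The quantity `δ_n` from the potential estimate. -/
noncomputable def moserDelta (M₁ a₀ r₀ : ℝ) (n : ℕ) : ℝ :=
  M₁ * r₀ ^ (a₀ + 2) * Real.log n / ((a₀ + 2) * (n : ℝ) ^ (a₀ + 2)) +
    M₁ / Real.log n *
      ∫ r in (r₀ / n)..r₀, (Real.log (r₀ / r)) ^ 2 * r ^ (a₀ + 1)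

/-- Radial profile of the Moser function. -/
noncomputable def mProf (r₀ : ℝ) (n : ℕ) (r : ℝ) : ℝ :=
  if r ≤ r₀ / n then Real.sqrt (Real.log n) / Real.sqrt (2 * π)
  else if r ≤ r₀ then Real.log (r₀ / r) / (Real.sqrt (2 * π) * Real.sqrt (Real.log n))
  else 0

lemma vol_ball_two : (volume (Metric.ball (0 : EuclideanSpace ℝ (Fin 2)) 1)).toReal = π := by
  rw [EuclideanSpace.volume_ball]
  simp only [Fintype.card_fin]
  rw [show ((2:ℕ):ℝ) / 2 + 1 = 2 by norm_num]
  rw [Real.Gamma_two, div_one, Real.sq_sqrt Real.pi_nonneg]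
  simp [ENNReal.toReal_ofReal Real.pi_nonneg]

lemma moser_ftc (a₀ r₀ : ℝ) (ha₀ : a₀ > -2) (hr₀ : 0 < r₀) (c : ℝ) (hc : 0 < c)
    (hcr : c ≤ r₀) :
    ∫ r in c..r₀, (Real.log (r₀ / r)) ^ 2 * r ^ (a₀ + 1) =
      (r₀ ^ (a₀ + 2) * ((Real.log (r₀ / r₀)) ^ 2 + 2 * Real.log (r₀ / r₀) / (a₀ + 2)
          + 2 / (a₀ + 2) ^ 2) / (a₀ + 2)) -
      (c ^ (a₀ + 2) * ((Real.log (r₀ / c)) ^ 2 + 2 * Real.log (r₀ / c) / (a₀ + 2)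
          + 2 / (a₀ + 2) ^ 2) / (a₀ + 2)) := by
  have hb : (0:ℝ) < a₀ + 2 := by linarith
  set b := a₀ + 2 with hbdef
  set F : ℝ → ℝ := fun r => r ^ b * ((Real.log (r₀ / r)) ^ 2 + 2 * Real.log (r₀ / r) / b
      + 2 / b ^ 2) / b with hF
  have key : ∀ t ∈ Set.uIcc c r₀, HasDerivAt F ((Real.log (r₀ / t)) ^ 2 * t ^ (a₀ + 1)) t := by
    intro t ht
    rw [Set.uIcc_of_le hcr] at ht
    have ht0 : 0 < t := lt_of_lt_of_le hc ht.1
    have htne : t ≠ 0 := ht0.ne'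
    -- G with log r₀ - log r
    set G : ℝ → ℝ := fun r => r ^ b * ((Real.log r₀ - Real.log r) ^ 2
        + 2 * (Real.log r₀ - Real.log r) / b + 2 / b ^ 2) / b with hG
    have hderiv : HasDerivAt G ((Real.log r₀ - Real.log t) ^ 2 * t ^ (a₀ + 1)) t := by
      have h1 : HasDerivAt (fun r : ℝ => r ^ b) (b * t ^ (b - 1)) t :=
        Real.hasDerivAt_rpow_const (Or.inl htne)
      have hlog : HasDerivAt (fun r : ℝ => Real.log r₀ - Real.log r) (-t⁻¹) t :=
        (Real.hasDerivAt_log htne).const_sub _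
      have h2 : HasDerivAt (fun r : ℝ => (Real.log r₀ - Real.log r) ^ 2
          + 2 * (Real.log r₀ - Real.log r) / b + 2 / b ^ 2)
          (2 * (Real.log r₀ - Real.log t) * (-t⁻¹) + 2 * (-t⁻¹) / b) t := by
        have := ((hlog.pow 2).add (((hlog.const_mul 2)).div_const b)).add_const (2 / b ^ 2)
        refine this.congr_deriv ?_
        ring
      have := (h1.mul h2).div_const b
      refine this.congr_deriv ?_
      have hpow : t ^ (a₀ + 1) = t ^ (b - 1) := by congr 1; rw [hbdef]; ring
      have hpow2 : t ^ b = t ^ (b - 1) * t := by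
        rw [← Real.rpow_add_one htne (b - 1)]; ring_nf
      rw [hpow, hpow2]
      field_simp
      ring
    have heq : F =ᶠ[nhds t] G := by
      filter_upwards [IsOpen.mem_nhds isOpen_Ioi ht0] with r hr
      rw [hF, hG]
      simp only
      rw [Real.log_div hr₀.ne' (ne_of_gt hr)]
    have : HasDerivAt F ((Real.log r₀ - Real.log t) ^ 2 * t ^ (a₀ + 1)) t :=
      hderiv.congr_of_eventuallyEq heq
    rwa [← Real.log_div hr₀.ne' htne] at this
  have hcont : IntervalIntegrable (fun r => (Real.log (r₀ / r)) ^ 2 * r ^ (a₀ + 1))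
      volume c r₀ := by
    apply ContinuousOn.intervalIntegrable
    rw [Set.uIcc_of_le hcr]
    have hsub : Set.Icc c r₀ ⊆ {x : ℝ | x ≠ 0} := fun x hx => (lt_of_lt_of_le hc hx.1).ne'
    apply ContinuousOn.mul
    · exact ((continuousOn_const.div continuousOn_id fun x hx => hsub hx).log
        fun x hx => div_ne_zero hr₀.ne' (hsub hx)).pow 2
    · exact continuousOn_id.rpow_const fun x hx => Or.inl (hsub hx)
  exact intervalIntegral.integral_eq_sub_of_hasDerivAt key hcont

lemma radial_eq (M₁ a₀ r₀ : ℝ) (ha₀ : a₀ > -2) (hr₀ : 0 < r₀) (n : ℕ) (hn : 2 ≤ n) :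
    IntegrableOn (fun y => y * (M₁ * y ^ a₀ * mProf r₀ n y ^ 2)) (Set.Ioi (0:ℝ)) ∧
    ∫ y in Set.Ioi (0:ℝ), y * (M₁ * y ^ a₀ * mProf r₀ n y ^ 2) =
      (M₁ * r₀ ^ (a₀ + 2) * Real.log n / ((a₀ + 2) * (n : ℝ) ^ (a₀ + 2)) +
        M₁ / Real.log n *
          ∫ r in (r₀ / n)..r₀, (Real.log (r₀ / r)) ^ 2 * r ^ (a₀ + 1)) / (2 * π) := by
  have hb : (0:ℝ) < a₀ + 2 := by linarith
  have hn1 : (1:ℝ) < (n:ℝ) := by exact_mod_cast hn.trans_lt' one_lt_two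
  have hn0 : (0:ℝ) < (n:ℝ) := by linarith
  have hlog : 0 < Real.log n := Real.log_pos hn1
  have hπ : (0:ℝ) < 2 * π := by positivity
  set c := r₀ / n with hcdef
  have hc : 0 < c := div_pos hr₀ hn0
  have hcr : c ≤ r₀ := by
    rw [hcdef, div_le_iff₀ hn0]
    nlinarith
  set ψ : ℝ → ℝ := fun y => y * (M₁ * y ^ a₀ * mProf r₀ n y ^ 2) with hψ
  -- values on pieces
  have hv1 : ∀ y ∈ Set.Ioc (0:ℝ) c, ψ y = (M₁ * Real.log n / (2 * π)) * y ^ (a₀ + 1) := by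
    intro y hy
    have hy0 : (0:ℝ) < y := hy.1
    have : mProf r₀ n y = Real.sqrt (Real.log n) / Real.sqrt (2 * π) := by
      rw [mProf, if_pos hy.2]
    rw [hψ]; simp only [this]
    rw [div_pow, Real.sq_sqrt hlog.le, Real.sq_sqrt hπ.le,
      Real.rpow_add_one hy0.ne' a₀]
    ring
  have hv2 : ∀ y ∈ Set.Ioc c r₀, ψ y =
      (M₁ / (2 * π * Real.log n)) * ((Real.log (r₀ / y)) ^ 2 * y ^ (a₀ + 1)) := by
    intro y hy
    have hy0 : (0:ℝ) < y := hc.trans hy.1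
    have : mProf r₀ n y = Real.log (r₀ / y) / (Real.sqrt (2 * π) * Real.sqrt (Real.log n)) := by
      rw [mProf, if_neg (not_le.2 hy.1), if_pos hy.2]
    rw [hψ]; simp only [this]
    rw [div_pow, mul_pow, Real.sq_sqrt hlog.le, Real.sq_sqrt hπ.le,
      Real.rpow_add_one hy0.ne' a₀]
    ring
  have hv3 : ∀ y ∈ Set.Ioi r₀, ψ y = 0 := by
    intro y hy
    have h1 : ¬ y ≤ c := not_le.2 (lt_of_le_of_lt hcr hy)
    have h2 : ¬ y ≤ r₀ := not_le.2 hy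
    rw [hψ]; simp only [mProf, ← hcdef, if_neg h1, if_neg h2]
    ring
  -- integrability on pieces
  have hi1 : IntegrableOn ψ (Set.Ioc 0 c) := by
    refine (IntegrableOn.congr_fun ?_ (fun y hy => (hv1 y hy).symm) measurableSet_Ioc)
    have : IntervalIntegrable (fun y : ℝ => (M₁ * Real.log n / (2 * π)) * y ^ (a₀ + 1))
        volume 0 c := (intervalIntegral.intervalIntegrable_rpow' (by linarith)).const_mul _
    exact (intervalIntegrable_iff_integrableOn_Ioc_of_le hc.le).1 this
  have hcont2 : IntegrableOn
      (fun y : ℝ => (M₁ / (2 * π * Real.log n)) * ((Real.log (r₀ / y)) ^ 2 * y ^ (a₀ + 1)))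
      (Set.Ioc c r₀) := by
    apply IntegrableOn.mono_set _ Set.Ioc_subset_Icc_self
    apply ContinuousOn.integrableOn_Icc
    have hsub : Set.Icc c r₀ ⊆ {x : ℝ | x ≠ 0} := fun x hx => (lt_of_lt_of_le hc hx.1).ne'
    exact continuousOn_const.mul ((((continuousOn_const.div continuousOn_id
      fun x hx => hsub hx).log fun x hx => div_ne_zero hr₀.ne' (hsub hx)).pow 2).mul
      (continuousOn_id.rpow_const fun x hx => Or.inl (hsub hx)))
  have hi2 : IntegrableOn ψ (Set.Ioc c r₀) :=
    IntegrableOn.congr_fun hcont2 (fun y hy => (hv2 y hy).symm) measurableSet_Ioc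
  have hi3 : IntegrableOn ψ (Set.Ioi r₀) :=
    IntegrableOn.congr_fun (integrableOn_zero) (fun y hy => (hv3 y hy).symm) measurableSet_Ioi
  have hi12 : IntegrableOn ψ (Set.Ioc 0 r₀) := by
    rw [← Set.Ioc_union_Ioc_eq_Ioc hc.le hcr]
    exact hi1.union hi2
  have hiall : IntegrableOn ψ (Set.Ioi 0) := by
    rw [← Set.Ioc_union_Ioi_eq_Ioi (hc.le.trans hcr)]
    exact hi12.union hi3
  refine ⟨hiall, ?_⟩
  -- compute
  have hsplit1 : ∫ y in Set.Ioi (0:ℝ), ψ y =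
      (∫ y in Set.Ioc (0:ℝ) r₀, ψ y) + ∫ y in Set.Ioi r₀, ψ y := by
    rw [← setIntegral_union (Set.Ioc_disjoint_Ioi le_rfl) measurableSet_Ioi hi12 hi3,
      Set.Ioc_union_Ioi_eq_Ioi (hc.le.trans hcr)]
  have hsplit2 : ∫ y in Set.Ioc (0:ℝ) r₀, ψ y =
      (∫ y in Set.Ioc (0:ℝ) c, ψ y) + ∫ y in Set.Ioc c r₀, ψ y := by
    rw [← setIntegral_union (Set.Ioc_disjoint_Ioc.2 ((min_le_left _ _).trans (le_max_right _ _))) measurableSet_Ioc hi1 hi2,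
      Set.Ioc_union_Ioc_eq_Ioc hc.le hcr]
  have hval1 : ∫ y in Set.Ioc (0:ℝ) c, ψ y =
      (M₁ * Real.log n / (2 * π)) * (c ^ (a₀ + 2) / (a₀ + 2)) := by
    rw [setIntegral_congr_fun measurableSet_Ioc hv1,
      ← intervalIntegral.integral_of_le hc.le, intervalIntegral.integral_const_mul,
      integral_rpow (Or.inl (by linarith))]
    rw [Real.zero_rpow (by linarith : (0:ℝ) < a₀ + 1 + 1).ne', show a₀ + 1 + 1 = a₀ + 2 by ring]
    ring
  have hval2 : ∫ y in Set.Ioc c r₀, ψ y =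
      (M₁ / (2 * π * Real.log n)) * ∫ r in c..r₀, (Real.log (r₀ / r)) ^ 2 * r ^ (a₀ + 1) := by
    rw [setIntegral_congr_fun measurableSet_Ioc hv2,
      ← intervalIntegral.integral_of_le hcr, intervalIntegral.integral_const_mul]
  have hval3 : ∫ y in Set.Ioi r₀, ψ y = 0 := by
    rw [setIntegral_congr_fun measurableSet_Ioi hv3, integral_zero]
  rw [hsplit1, hsplit2, hval1, hval2, hval3]
  have hcpow : c ^ (a₀ + 2) = r₀ ^ (a₀ + 2) / (n:ℝ) ^ (a₀ + 2) :=
    Real.div_rpow hr₀.le hn0.le (a₀ + 2)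
  have hnb : ((n:ℝ)) ^ (a₀ + 2) ≠ 0 := (Real.rpow_pos_of_pos hn0 _).ne'
  rw [hcpow]
  field_simp
  ring

lemma moser_part1 (V : ℝ → ℝ) (M₁ a₀ r₀ : ℝ) (hM₁ : 0 < M₁) (ha₀ : a₀ > -2)
    (hr₀ : 0 < r₀) (hr₀' : r₀ ≤ 1)
    (hV : ∀ r : ℝ, 0 < r → r ≤ 1 → V r ≤ M₁ * r ^ a₀) (n : ℕ) (hn : 2 ≤ n) :
    ∫ x, V ‖x‖ * (moserFn r₀ n x) ^ 2 ≤ moserDelta M₁ a₀ r₀ n := by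
  have hb : (0:ℝ) < a₀ + 2 := by linarith
  have hn1 : (1:ℝ) < (n:ℝ) := by exact_mod_cast hn.trans_lt' one_lt_two
  have hn0 : (0:ℝ) < (n:ℝ) := by linarith
  have hlog : 0 < Real.log n := Real.log_pos hn1
  have hc : 0 < r₀ / n := div_pos hr₀ hn0
  have hcr : r₀ / n ≤ r₀ := by
    rw [div_le_iff₀ hn0]; nlinarith
  -- δ ≥ 0
  have hδ : 0 ≤ moserDelta M₁ a₀ r₀ n := by
    rw [moserDelta]
    have h1 : 0 ≤ M₁ * r₀ ^ (a₀ + 2) * Real.log n / ((a₀ + 2) * (n : ℝ) ^ (a₀ + 2)) := by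
      apply div_nonneg
      · exact mul_nonneg (mul_nonneg hM₁.le (Real.rpow_pos_of_pos hr₀ _).le) hlog.le
      · exact mul_nonneg hb.le (Real.rpow_pos_of_pos hn0 _).le
    have h2 : 0 ≤ ∫ r in (r₀ / n)..r₀, (Real.log (r₀ / r)) ^ 2 * r ^ (a₀ + 1) := by
      apply intervalIntegral.integral_nonneg hcr
      intro u hu
      exact mul_nonneg (sq_nonneg _) (Real.rpow_nonneg (hc.le.trans hu.1) _)
    positivity
  -- polar coordinates
  have hpolar := integral_fun_norm_addHaar (volume : Measure (EuclideanSpace ℝ (Fin 2)))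
    (fun r => V r * (mProf r₀ n r) ^ 2)
  simp only [finrank_euclideanSpace_fin, measureReal_def, vol_ball_two, smul_eq_mul,
    nsmul_eq_mul, Nat.cast_ofNat, show (2 - 1 : ℕ) = 1 from rfl, pow_one] at hpolar
  have hrw : (∫ x, V ‖x‖ * (moserFn r₀ n x) ^ 2) =
      ∫ x : EuclideanSpace ℝ (Fin 2), (fun r => V r * (mProf r₀ n r) ^ 2) ‖x‖ := rfl
  rw [hrw, hpolar]
  have hradial := radial_eq M₁ a₀ r₀ ha₀ hr₀ n hn
  set ψ : ℝ → ℝ := fun y => y * (M₁ * y ^ a₀ * mProf r₀ n y ^ 2) with hψ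
  set h : ℝ → ℝ := fun y => y * (V y * mProf r₀ n y ^ 2) with hh
  by_cases hint : IntegrableOn h (Set.Ioi (0:ℝ)) volume
  · have hle : ∀ y ∈ Set.Ioi (0:ℝ), h y ≤ ψ y := by
      intro y hy
      have hy0 : (0:ℝ) < y := hy
      by_cases hyr : y ≤ r₀
      · exact mul_le_mul_of_nonneg_left
          (mul_le_mul_of_nonneg_right (hV y hy0 (hyr.trans hr₀')) (sq_nonneg _)) hy0.le
      · have hm : mProf r₀ n y = 0 := by
          rw [mProf, if_neg, if_neg hyr]
          exact fun hyc => hyr (hyc.trans hcr)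
        simp [hh, hψ, hm]
    have hJ : ∫ y in Set.Ioi (0:ℝ), h y ≤ ∫ y in Set.Ioi (0:ℝ), ψ y :=
      setIntegral_mono_on hint hradial.1 measurableSet_Ioi hle
    calc 2 * (π * ∫ y in Set.Ioi (0:ℝ), h y) ≤ 2 * (π * ∫ y in Set.Ioi (0:ℝ), ψ y) := by
          have := mul_le_mul_of_nonneg_left hJ Real.pi_pos.le
          linarith
      _ = moserDelta M₁ a₀ r₀ n := by
          rw [hradial.2, moserDelta]
          field_simp
  · rw [integral_undef hint]
    simpa using hδ

lemma moser_part2 (M₁ a₀ r₀ : ℝ) (hM₁ : 0 < M₁) (ha₀ : a₀ > -2)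
    (hr₀ : 0 < r₀) :
    Tendsto (fun n : ℕ => moserDelta M₁ a₀ r₀ n * Real.log n) atTop
      (nhds (2 * M₁ * r₀ ^ (a₀ + 2) / (a₀ + 2) ^ 3)) := by
  have hb : (0:ℝ) < a₀ + 2 := by linarith
  set L : ℝ := 2 * M₁ * r₀ ^ (a₀ + 2) / (a₀ + 2) ^ 3 with hL
  set C : ℝ := 2 * M₁ * r₀ ^ (a₀ + 2) / (a₀ + 2) ^ 2 with hC
  set D : ℝ := 2 * M₁ * r₀ ^ (a₀ + 2) / (a₀ + 2) ^ 3 with hD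
  -- pointwise identity for n ≥ 2
  have hid : ∀ n : ℕ, 2 ≤ n → moserDelta M₁ a₀ r₀ n * Real.log n =
      L - C * (Real.log n / (n:ℝ) ^ (a₀ + 2)) - D * ((n:ℝ) ^ (a₀ + 2))⁻¹ := by
    intro n hn
    have hn1 : (1:ℝ) < (n:ℝ) := by exact_mod_cast hn.trans_lt' one_lt_two
    have hn0 : (0:ℝ) < (n:ℝ) := by linarith
    have hlog : 0 < Real.log n := Real.log_pos hn1
    have hc : 0 < r₀ / n := div_pos hr₀ hn0
    have hcr : r₀ / n ≤ r₀ := by rw [div_le_iff₀ hn0]; nlinarith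
    have hftc := moser_ftc a₀ r₀ ha₀ hr₀ (r₀ / n) hc hcr
    have h1 : Real.log (r₀ / r₀) = 0 := by rw [div_self hr₀.ne', Real.log_one]
    have h2 : r₀ / (r₀ / n) = (n:ℝ) := by field_simp
    have h3 : (r₀ / (n:ℝ)) ^ (a₀ + 2) = r₀ ^ (a₀ + 2) / (n:ℝ) ^ (a₀ + 2) :=
      Real.div_rpow hr₀.le hn0.le (a₀ + 2)
    rw [h1, h2, h3] at hftc
    rw [moserDelta, hftc]
    have hnb : ((n:ℝ)) ^ (a₀ + 2) ≠ 0 := (Real.rpow_pos_of_pos hn0 _).ne'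
    rw [hL, hC, hD]
    field_simp
    ring
  -- limits
  have t1 : Tendsto (fun n : ℕ => Real.log n / (n:ℝ) ^ (a₀ + 2)) atTop (nhds 0) :=
    ((isLittleO_log_rpow_atTop hb).tendsto_div_nhds_zero).comp
      tendsto_natCast_atTop_atTop
  have t2 : Tendsto (fun n : ℕ => ((n:ℝ) ^ (a₀ + 2))⁻¹) atTop (nhds 0) :=
    ((tendsto_rpow_atTop hb).comp tendsto_natCast_atTop_atTop).inv_tendsto_atTop
  have tmain : Tendsto (fun n : ℕ =>
      L - C * (Real.log n / (n:ℝ) ^ (a₀ + 2)) - D * ((n:ℝ) ^ (a₀ + 2))⁻¹) atTop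
      (nhds (L - C * 0 - D * 0)) :=
    (tendsto_const_nhds.sub (t1.const_mul C)).sub (t2.const_mul D)
  simp only [mul_zero, sub_zero] at tmain
  exact tmain.congr' (by filter_upwards [eventually_ge_atTop 2] with n hn
    using (hid n hn).symm)

theorem stmt_14 (V : ℝ → ℝ) (M₁ a₀ r₀ : ℝ) (hM₁ : 0 < M₁) (ha₀ : a₀ > -2)
    (hr₀ : 0 < r₀) (hr₀' : r₀ ≤ 1)
    (hV : ∀ r : ℝ, 0 < r → r ≤ 1 → V r ≤ M₁ * r ^ a₀) :
    (∀ n : ℕ, 2 ≤ n →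
      ∫ x, V ‖x‖ * (moserFn r₀ n x) ^ 2 ≤ moserDelta M₁ a₀ r₀ n) ∧
    Tendsto (fun n : ℕ => moserDelta M₁ a₀ r₀ n * Real.log n) atTop
      (nhds (2 * M₁ * r₀ ^ (a₀ + 2) / (a₀ + 2) ^ 3)) := by
  exact ⟨fun n hn => moser_part1 V M₁ a₀ r₀ hM₁ ha₀ hr₀ hr₀' hV n hn,
    moser_part2 M₁ a₀ r₀ hM₁ ha₀ hr₀⟩
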